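/- Along the PP/PG algorithm started at (2/3, 4/3), the first component is always strictly between 1/2 and 1, the second component is always strictly between 1 and 2, the first components form a nondecreasing sequence, and the second components form a nonincreasing sequence: for all n, 1/2 < aₙ < 1 < bₙ < 2, aₙ ≤ aₙ₊₁, and bₙ₊₁ ≤ bₙ. -/
import Mathlib


/-- One step of the PP/PG algorithm: replace the pair `(a, b)` by `(a·b, b)`
if `a·b < 1` and by `(a, a·b)` otherwise. -/
noncomputable def step (p : ℝ × ℝ) : ℝ × ℝ :=
  if p.1 * p.2 < 1 then (p.1 * p.2, p.2) else (p.1, p.1 * p.2)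

/-- The PP/PG algorithm for the original Collatz mapping, started at `(2/3, 4/3)`. -/
noncomputable def s : ℕ → ℝ × ℝ
  | 0 => (2 / 3, 4 / 3)
  | n + 1 => step (s n)

/-- Along the PP/PG algorithm started at `(2/3, 4/3)`: `1/2 < aₙ < 1 < bₙ < 2`,
the `aₙ` are nondecreasing, and the `bₙ` are nonincreasing. -/
lemma s_inv (n : ℕ) : ∃ pa qa pb qb : ℕ,
    (s n).1 = 2 ^ pa / 3 ^ qa ∧ (s n).2 = 2 ^ pb / 3 ^ qb ∧
    2 ^ pa < 3 ^ qa ∧ 3 ^ qb < 2 ^ pb ∧ 1 / 2 < (s n).1 ∧ (s n).2 < 2 := by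
  induction n with
  | zero =>
    refine ⟨1, 1, 2, 1, ?_, ?_, ?_, ?_, ?_, ?_⟩ <;> simp [s] <;> norm_num
  | succ n ih =>
    obtain ⟨pa, qa, pb, qb, ha, hb, hpa, hqb, ha2, hb2⟩ := ih
    have h3pos : ∀ k : ℕ, (0:ℝ) < 3 ^ k := fun k => by positivity
    have halt1 : (s n).1 < 1 := by
      rw [ha, div_lt_one (h3pos qa)]
      exact_mod_cast hpa
    have hbgt1 : 1 < (s n).2 := by
      rw [hb, lt_div_iff₀ (h3pos qb)]
      simpa using (show ((3:ℝ) ^ qb) < 2 ^ pb by exact_mod_cast hqb)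
    have hapos : (0:ℝ) < (s n).1 := lt_trans (by norm_num) ha2
    have habprod : (s n).1 * (s n).2 = 2 ^ (pa + pb) / 3 ^ (qa + qb) := by
      rw [ha, hb, pow_add, pow_add]; ring
    have habne1 : (s n).1 * (s n).2 ≠ 1 := by
      intro h
      rw [habprod, div_eq_one_iff_eq (ne_of_gt (h3pos _))] at h
      have h' : 2 ^ (pa + pb) = 3 ^ (qa + qb) := by exact_mod_cast h
      have hq : qa + qb = 0 := by
        by_contra hq
        have : (3 : ℕ) ∣ 2 ^ (pa + pb) := h' ▸ dvd_pow_self 3 hq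
        have := Nat.Prime.dvd_of_dvd_pow (p := 3) (by norm_num) this
        omega
      have hp : pa + pb = 0 := by
        by_contra hp
        rw [hq, pow_zero] at h'
        have : (2:ℕ) ∣ 1 := h' ▸ dvd_pow_self 2 hp
        omega
      have : pa = 0 ∧ qa = 0 := ⟨by omega, by omega⟩
      rw [this.1, this.2] at hpa; simp at hpa
    have hs : s (n + 1) = step (s n) := rfl
    rw [hs]
    unfold step
    by_cases hlt : (s n).1 * (s n).2 < 1
    · rw [if_pos hlt]
      refine ⟨pa + pb, qa + qb, pb, qb, habprod, hb, ?_, hqb, ?_, hb2⟩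
      · have : (2:ℝ) ^ (pa + pb) < 3 ^ (qa + qb) := by
          rw [habprod, div_lt_one (h3pos _)] at hlt
          exact hlt
        exact_mod_cast this
      · nlinarith [ha2, hbgt1, hapos]
    · rw [if_neg hlt]
      have hgt : 1 < (s n).1 * (s n).2 :=
        lt_of_le_of_ne (not_lt.mp hlt) (Ne.symm habne1)
      refine ⟨pa, qa, pa + pb, qa + qb, ha, habprod, hpa, ?_, ha2, ?_⟩
      · have : (3:ℝ) ^ (qa + qb) < 2 ^ (pa + pb) := by
          rw [habprod, lt_div_iff₀ (h3pos _)] at hgt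
          linarith
        exact_mod_cast this
      · show (s n).1 * (s n).2 < 2
        nlinarith [mul_pos (sub_pos.mpr halt1) (lt_trans one_pos hbgt1), hb2]

theorem s_bounds_monotone (n : ℕ) :
    1 / 2 < (s n).1 ∧ (s n).1 < 1 ∧ 1 < (s n).2 ∧ (s n).2 < 2 ∧
    (s n).1 ≤ (s (n + 1)).1 ∧ (s (n + 1)).2 ≤ (s n).2 := by
  obtain ⟨pa, qa, pb, qb, ha, hb, hpa, hqb, ha2, hb2⟩ := s_inv n
  have h3pos : ∀ k : ℕ, (0:ℝ) < 3 ^ k := fun k => by positivity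
  have halt1 : (s n).1 < 1 := by
    rw [ha, div_lt_one (h3pos qa)]
    exact_mod_cast hpa
  have hbgt1 : 1 < (s n).2 := by
    rw [hb, lt_div_iff₀ (h3pos qb)]
    simpa using (show ((3:ℝ) ^ qb) < 2 ^ pb by exact_mod_cast hqb)
  have hapos : (0:ℝ) < (s n).1 := lt_trans (by norm_num) ha2
  have hs : s (n + 1) = step (s n) := rfl
  refine ⟨ha2, halt1, hbgt1, hb2, ?_, ?_⟩ <;> rw [hs] <;> unfold step <;>
      split_ifs with hlt <;>
      first
        | exact le_mul_of_one_le_right (le_of_lt hapos) (le_of_lt hbgt1)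
        | exact le_refl _
        | exact mul_le_of_le_one_left (le_of_lt (lt_trans one_pos hbgt1)) (le_of_lt halt1)
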